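/- For every d ≥ 9, ⌊(d+1)/2⌋·(d − ⌊(d+1)/2⌋) + d < M(d) + d, where M(d) = 3^k if d = 3k, 4·3^{k-1} if d = 3k+1, and 2·3^k if d = 3k+2. Consequently, for each d ≥ 9 there exists a finite poset P on [d] whose chain polytope C(P) has strictly more facets than the maximum possible number of facets of any order polytope of a poset on [d]. -/

import Mathlib

open Finset

/-- `b` covers `a` in the partial order `r`. -/
def covRel {α : Type*} (r : α → α → Prop) (a b : α) : Prop :=
  r a b ∧ a ≠ b ∧ ∀ c, r a c → r c b → c = a ∨ c = b

/-- **Ordered Mantel**: a triangle-free symmetric relation on a type of at most `n`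
elements has at most `n^2/2` ordered edges. -/

lemma omantel : ∀ (n : ℕ) (V : Type) [Fintype V] [DecidableEq V] (adj : V → V → Prop)
    [DecidableRel adj], Fintype.card V ≤ n → Symmetric adj →
    (∀ a b c, adj a b → adj b c → adj a c → False) →
    (Finset.univ.filter (fun p : V × V => adj p.1 p.2)).card ≤ n^2/2 := by
  intro n
  induction n using Nat.strong_induction_on with
  | _ n ih =>
    intro V _ _ adj _ hcard hsymm htri
    by_cases hE : (Finset.univ.filter (fun p : V × V => adj p.1 p.2)) = ∅
    · simp [hE]
    · obtain ⟨p, hp⟩ := Finset.nonempty_iff_ne_empty.2 hE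
      rw [Finset.mem_filter] at hp
      have hadj : adj p.1 p.2 := hp.2
      set u := p.1 with hu
      set v := p.2 with hv
      have hne : u ≠ v := by rintro h; exact htri u u u (h ▸ hadj) (h ▸ hadj) (h ▸ hadj)
      have h2V : 2 ≤ Fintype.card V := Fintype.one_lt_card_iff_nontrivial.2 ⟨u, v, hne⟩
      have h2n : 2 ≤ n := le_trans h2V hcard
      have hcard' : Fintype.card {x : V // x ≠ u ∧ x ≠ v} ≤ n - 2 := by
        rw [Fintype.card_subtype]
        have hsub : (Finset.univ.filter (fun x : V => x ≠ u ∧ x ≠ v)) = Finset.univ \ {u, v} := by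
          ext x; simp
        rw [hsub, Finset.card_sdiff_of_subset (by simp)]
        have h2 : ({u, v} : Finset V).card = 2 := by
          rw [Finset.card_insert_of_notMem (by simp [hne]), Finset.card_singleton]
        rw [Finset.card_univ, h2]
        omega
      have IH := ih (n-2) (by omega) {x : V // x ≠ u ∧ x ≠ v}
        (fun x y => adj x.1 y.1) hcard' (fun x y h => hsymm h)
        (fun a b c h1 h2 h3 => htri _ _ _ h1 h2 h3)
      set O := Finset.univ.filter (fun p : V × V => adj p.1 p.2) with hO
      set P := fun p : V × V => p.1 = u ∨ p.1 = v ∨ p.2 = u ∨ p.2 = v with hP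
      have hsplit : (O.filter P).card + (O.filter (fun p => ¬ P p)).card = O.card :=
        Finset.card_filter_add_card_filter_not _
      have hfar : (O.filter (fun p => ¬ P p)).card ≤ (n-2)^2/2 := by
        have hsub : O.filter (fun p => ¬ P p) ⊆
            (Finset.univ.filter
              (fun q : {x : V // x ≠ u ∧ x ≠ v} × {x : V // x ≠ u ∧ x ≠ v} =>
                adj q.1.1 q.2.1)).image (fun q => (q.1.1, q.2.1)) := by
          intro q hq
          simp only [hO, hP, Finset.mem_filter, Finset.mem_univ, true_and] at hq
          push_neg at hq
          obtain ⟨hqadj, h1, h2, h3, h4⟩ := hq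
          exact Finset.mem_image.2 ⟨(⟨q.1, h1, h2⟩, ⟨q.2, h3, h4⟩),
            Finset.mem_filter.2 ⟨Finset.mem_univ _, hqadj⟩, Prod.mk.eta⟩
        exact le_trans (Finset.card_le_card hsub) (le_trans Finset.card_image_le IH)
      have hnear : (O.filter P).card ≤ 2*n - 2 := by
        set E1 := O.filter (fun p => p.1 = u ∨ p.1 = v) with hE1def
        set E2 := O.filter (fun p => p.2 = u ∨ p.2 = v) with hE2def
        have hsub : O.filter P ⊆ E1 ∪ E2 := by
          intro q hq
          simp only [hE1def, hE2def, hP, Finset.mem_filter, Finset.mem_union] at *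
          tauto
        have hE2 : E2.card ≤ Fintype.card V := by
          rw [← Finset.card_univ]
          apply Finset.card_le_card_of_injOn (fun p => p.1) (fun _ _ => Finset.mem_univ _)
          intro a ha b hb hab
          simp only [Finset.mem_coe, hE2def, hO, Finset.mem_filter, Finset.mem_univ,
            true_and] at ha hb
          have h2 : a.2 = b.2 := by
            rcases ha.2 with h | h <;> rcases hb.2 with h' | h'
            · rw [h, h']
            · exfalso
              have k1 : adj a.1 u := h ▸ ha.1
              have k2 : adj b.1 v := h' ▸ hb.1
              have hab' : a.1 = b.1 := hab
              rw [hab'] at k1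
              exact htri u b.1 v (hsymm k1) k2 hadj
            · exfalso
              have k1 : adj b.1 u := h' ▸ hb.1
              have k2 : adj a.1 v := h ▸ ha.1
              have hab' : a.1 = b.1 := hab
              rw [hab'] at k2
              exact htri u b.1 v (hsymm k1) k2 hadj
            · rw [h, h']
          exact Prod.ext hab h2
        have hE1 : E1.card ≤ Fintype.card V := by
          rw [← Finset.card_univ]
          apply Finset.card_le_card_of_injOn (fun p => p.2) (fun _ _ => Finset.mem_univ _)
          intro a ha b hb hab
          simp only [Finset.mem_coe, hE1def, hO, Finset.mem_filter, Finset.mem_univ,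
            true_and] at ha hb
          have h1 : a.1 = b.1 := by
            rcases ha.2 with h | h <;> rcases hb.2 with h' | h'
            · rw [h, h']
            · exfalso
              have k1 : adj u a.2 := h ▸ ha.1
              have k2 : adj v b.2 := h' ▸ hb.1
              have hab' : a.2 = b.2 := hab
              rw [hab'] at k1
              exact htri u b.2 v k1 (hsymm k2) hadj
            · exfalso
              have k1 : adj u b.2 := h' ▸ hb.1
              have k2 : adj v a.2 := h ▸ ha.1
              have hab' : a.2 = b.2 := hab
              rw [hab'] at k2
              exact htri u b.2 v k1 (hsymm k2) hadj
            · rw [h, h']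
          exact Prod.ext h1 hab
        have hpairs : ({(u,v), (v,u)} : Finset (V × V)) ⊆ E1 ∩ E2 := by
          intro q hq
          simp only [Finset.mem_insert, Finset.mem_singleton] at hq
          rcases hq with rfl | rfl <;>
            simp [hE1def, hE2def, hO, hadj, hsymm hadj]
        have hcard2 : ({(u,v), (v,u)} : Finset (V × V)).card = 2 := by
          rw [Finset.card_insert_of_notMem (by simp [hne]), Finset.card_singleton]
        have hIE : 2 ≤ (E1 ∩ E2).card := hcard2 ▸ Finset.card_le_card hpairs
        have hunion := Finset.card_union_add_card_inter E1 E2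
        have h1 : (O.filter P).card ≤ (E1 ∪ E2).card := Finset.card_le_card hsub
        omega
      have hm : n^2/2 = (n-2)^2/2 + (2*n - 2) := by
        obtain ⟨m, rfl⟩ : ∃ m, n = m + 2 := ⟨n - 2, by omega⟩
        have e1 : m + 2 - 2 = m := by omega
        have e2 : 2*(m+2) - 2 = 2*m + 2 := by omega
        have e3 : (m+2)^2 = m^2 + (2*m+2) * 2 := by ring
        rw [e1, e2, e3, Nat.add_mul_div_right _ _ (by norm_num : (0:ℕ) < 2)]
      omega

variable {d : ℕ}

/-- auxiliary graph: cover relations plus bottom (`inr false`) joined to minimal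
elements and top (`inr true`) joined to maximal elements. -/
def gadj (r' : Fin d → Fin d → Prop) : (Fin d ⊕ Bool) → (Fin d ⊕ Bool) → Prop
  | Sum.inl a, Sum.inl b => covRel r' a b ∨ covRel r' b a
  | Sum.inl a, Sum.inr false => ∀ b, r' b a → b = a
  | Sum.inr false, Sum.inl a => ∀ b, r' b a → b = a
  | Sum.inl a, Sum.inr true => ∀ b, r' a b → b = a
  | Sum.inr true, Sum.inl a => ∀ b, r' a b → b = a
  | Sum.inr _, Sum.inr _ => False

lemma gadj_symm (r' : Fin d → Fin d → Prop) : Symmetric (gadj r') := by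
  rintro (a | (_|_)) (b | (_|_)) h <;> simp_all [gadj] <;> tauto

lemma cov_mid {r' : Fin d → Fin d → Prop} {x y z : Fin d} (h1 : r' x y) (h2 : r' y z)
    (hyx : y ≠ x) (hyz : y ≠ z) (hc : covRel r' x z) : False := by
  rcases hc.2.2 y h1 h2 with h | h
  · exact hyx h
  · exact hyz h

lemma cov_tri {r' : Fin d → Fin d → Prop} (hpo : IsPartialOrder (Fin d) r')
    {a b c : Fin d} (h1 : covRel r' a b ∨ covRel r' b a)
    (h2 : covRel r' b c ∨ covRel r' c b)
    (h3 : covRel r' a c ∨ covRel r' c a) : False := by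
  have htrans : ∀ {x y z : Fin d}, r' x y → r' y z → r' x z :=
    fun hxy hyz => hpo.toIsPreorder.toIsTrans.trans _ _ _ hxy hyz
  rcases h1 with ⟨r1, n1, m1⟩ | ⟨r1, n1, m1⟩ <;>
    rcases h2 with ⟨r2, n2, m2⟩ | ⟨r2, n2, m2⟩ <;>
      rcases h3 with ⟨r3, n3, m3⟩ | ⟨r3, n3, m3⟩
  · exact cov_mid r1 r2 (Ne.symm n1) n2 ⟨r3, n3, m3⟩
  · exact n3 (hpo.toAntisymm.antisymm _ _ r3 (htrans r1 r2))
  · exact cov_mid r3 r2 (Ne.symm n3) n2 ⟨r1, n1, m1⟩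
  · exact cov_mid r3 r1 (Ne.symm n3) n1 ⟨r2, n2, m2⟩
  · exact cov_mid r1 r3 (Ne.symm n1) n3 ⟨r2, n2, m2⟩
  · exact cov_mid r2 r3 (Ne.symm n2) n3 ⟨r1, n1, m1⟩
  · exact n3 (hpo.toAntisymm.antisymm _ _ r3 (htrans r2 r1))
  · exact cov_mid r2 r1 (Ne.symm n2) n1 ⟨r3, n3, m3⟩

lemma min_min {r' : Fin d → Fin d → Prop} {a b : Fin d}
    (ha : ∀ c, r' c a → c = a) (hb : ∀ c, r' c b → c = b)
    (h : covRel r' a b ∨ covRel r' b a) : False := by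
  rcases h with ⟨r1, n1, -⟩ | ⟨r1, n1, -⟩
  · exact n1 (hb a r1)
  · exact n1 (ha b r1)

lemma max_max {r' : Fin d → Fin d → Prop} {a b : Fin d}
    (ha : ∀ c, r' a c → c = a) (hb : ∀ c, r' b c → c = b)
    (h : covRel r' a b ∨ covRel r' b a) : False := by
  rcases h with ⟨r1, n1, -⟩ | ⟨r1, n1, -⟩
  · exact n1 (ha b r1).symm
  · exact n1 (hb a r1).symm

lemma gadj_tri {r' : Fin d → Fin d → Prop} (hpo : IsPartialOrder (Fin d) r') :
    ∀ x y z, gadj r' x y → gadj r' y z → gadj r' x z → False := by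
  rintro (a | (_|_)) (b | (_|_)) (c | (_|_)) h1 h2 h3 <;>
    simp only [gadj] at h1 h2 h3 <;>
    first
      | exact h1 | exact h2 | exact h3
      | exact cov_tri hpo h1 h2 h3
      | exact min_min h3 h2 h1 | exact min_min h1 h2 h3 | exact min_min h1 h3 h2
      | exact max_max h3 h2 h1 | exact max_max h1 h2 h3 | exact max_max h1 h3 h2

/-- Injection from (minimals ⊕ maximals ⊕ covers) × Bool into ordered edges of `gadj`. -/
def Phi (r' : Fin d → Fin d → Prop) :
    ({a : Fin d // ∀ b, r' b a → b = a} ⊕ {a : Fin d // ∀ b, r' a b → b = a} ⊕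
      {p : Fin d × Fin d // covRel r' p.1 p.2}) × Bool →
    {p : (Fin d ⊕ Bool) × (Fin d ⊕ Bool) // gadj r' p.1 p.2}
  | (Sum.inl a, false) => ⟨(Sum.inr false, Sum.inl a.1), a.2⟩
  | (Sum.inl a, true) => ⟨(Sum.inl a.1, Sum.inr false), a.2⟩
  | (Sum.inr (Sum.inl a), false) => ⟨(Sum.inr true, Sum.inl a.1), a.2⟩
  | (Sum.inr (Sum.inl a), true) => ⟨(Sum.inl a.1, Sum.inr true), a.2⟩
  | (Sum.inr (Sum.inr p), false) => ⟨(Sum.inl p.1.1, Sum.inl p.1.2), Or.inl p.2⟩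
  | (Sum.inr (Sum.inr p), true) => ⟨(Sum.inl p.1.2, Sum.inl p.1.1), Or.inr p.2⟩

lemma Phi_inj {r' : Fin d → Fin d → Prop} (hpo : IsPartialOrder (Fin d) r') :
    Function.Injective (Phi r') := by
  rintro ⟨(⟨a, ha⟩ | ⟨a, ha⟩ | ⟨⟨a1, a2⟩, ha⟩), (_|_)⟩
      ⟨(⟨b, hb⟩ | ⟨b, hb⟩ | ⟨⟨b1, b2⟩, hb⟩), (_|_)⟩ h <;>
    simp only [Phi, Subtype.ext_iff, Prod.mk.injEq, Sum.inl.injEq, Sum.inr.injEq,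
      reduceCtorEq, false_and, and_false, and_true, true_and] at h <;>
    try simp_all
  · exact absurd (hpo.toAntisymm.antisymm _ _ ha.1 (h.1 ▸ h.2 ▸ hb.1)) ha.2.1
  · exact absurd (hpo.toAntisymm.antisymm _ _ ha.1 (h.1 ▸ h.2 ▸ hb.1)) ha.2.1

lemma facet_bound (d : ℕ) (r' : Fin d → Fin d → Prop) (hpo : IsPartialOrder (Fin d) r') :
    Nat.card {a : Fin d // ∀ b, r' b a → b = a} +
      Nat.card {a : Fin d // ∀ b, r' a b → b = a} +
      Nat.card {p : Fin d × Fin d // covRel r' p.1 p.2} ≤ (d+2)^2/4 := by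
  classical
  haveI : DecidableRel (gadj r') := fun x y => Classical.dec _
  have hcardV : Fintype.card (Fin d ⊕ Bool) ≤ d + 2 := by
    simp [Fintype.card_sum]
  have hman := omantel (d+2) (Fin d ⊕ Bool) (gadj r') hcardV (gadj_symm r') (gadj_tri hpo)
  have hconv : Nat.card {p : (Fin d ⊕ Bool) × (Fin d ⊕ Bool) // gadj r' p.1 p.2} =
      (Finset.univ.filter (fun p : (Fin d ⊕ Bool) × (Fin d ⊕ Bool) => gadj r' p.1 p.2)).card := by
    rw [Nat.card_eq_fintype_card, Fintype.card_subtype]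
  have hinj := Nat.card_le_card_of_injective (Phi r') (Phi_inj hpo)
  have hdom : Nat.card (({a : Fin d // ∀ b, r' b a → b = a} ⊕ {a : Fin d // ∀ b, r' a b → b = a} ⊕
      {p : Fin d × Fin d // covRel r' p.1 p.2}) × Bool) =
      (Nat.card {a : Fin d // ∀ b, r' b a → b = a} +
        (Nat.card {a : Fin d // ∀ b, r' a b → b = a} +
        Nat.card {p : Fin d × Fin d // covRel r' p.1 p.2})) * 2 := by
    rw [Nat.card_prod, Nat.card_sum, Nat.card_sum]
    simp [Nat.card_eq_fintype_card]
  rw [hdom, hconv] at hinj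
  have h2 := le_trans hinj hman
  set x := (d+2)^2 with hx
  set A := Nat.card {a : Fin d // ∀ b, r' b a → b = a}
  set B := Nat.card {a : Fin d // ∀ b, r' a b → b = a}
  set E := Nat.card {p : Fin d × Fin d // covRel r' p.1 p.2}
  omega




/-- the poset: stacked antichains `{0,1,2} < {3,4,5} < ...` -/
def rord (d : ℕ) : Fin d → Fin d → Prop := fun a b => a = b ∨ (a : ℕ)/3 < (b : ℕ)/3

lemma rord_po (d : ℕ) : IsPartialOrder (Fin d) (rord d) where
  refl := fun a => Or.inl rfl
  trans := by
    rintro a b c (rfl | h) hbc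
    · exact hbc
    · rcases hbc with rfl | h'
      · exact Or.inr h
      · exact Or.inr (h.trans h')
  antisymm := by
    rintro a b (rfl | h) hba
    · rfl
    · rcases hba with rfl | h'
      · rfl
      · omega

def Cset (d : ℕ) (e : ℕ → ℕ) : Set (Fin d) :=
  {x | (x : ℕ) = 3 * ((x : ℕ)/3) + e ((x : ℕ)/3)}

lemma Cset_block_mem (d : ℕ) (e : ℕ → ℕ) (he3 : ∀ i, e i < 3)
    (hed : ∀ i, 3*i < d → 3*i + e i < d) (i : ℕ) (hi : 3*i < d) :
    (⟨3*i + e i, hed i hi⟩ : Fin d) ∈ Cset d e := by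
  have h3 : (3*i + e i)/3 = i := by have := he3 i; omega
  simp only [Cset, Set.mem_setOf_eq]
  rw [h3]

lemma Cset_uniq (d : ℕ) (e : ℕ → ℕ) {x y : Fin d} (hx : x ∈ Cset d e) (hy : y ∈ Cset d e)
    (h : (x : ℕ)/3 = (y : ℕ)/3) : x = y := by
  simp only [Cset, Set.mem_setOf_eq] at hx hy
  rw [h] at hx
  exact Fin.ext (by omega)

lemma Cset_maxchain (d : ℕ) (e : ℕ → ℕ) (he3 : ∀ i, e i < 3)
    (hed : ∀ i, 3*i < d → 3*i + e i < d) : IsMaxChain (rord d) (Cset d e) := by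
  constructor
  · intro x hx y hy hne
    by_cases h : (x : ℕ)/3 = (y : ℕ)/3
    · exact absurd (Cset_uniq d e hx hy h) hne
    · rcases Nat.lt_or_ge ((x : ℕ)/3) ((y : ℕ)/3) with h' | h'
      · exact Or.inl (Or.inr h')
      · exact Or.inr (Or.inr (by omega))
  · intro t hchain hsub
    refine Set.Subset.antisymm hsub (fun y hy => ?_)
    have hyd : (y : ℕ) < d := y.isLt
    have hi : 3 * ((y : ℕ)/3) < d := by omega
    set z : Fin d := ⟨3*((y : ℕ)/3) + e ((y : ℕ)/3), hed _ hi⟩ with hzdef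
    have hz : z ∈ Cset d e := Cset_block_mem d e he3 hed _ hi
    have hz3 : (z : ℕ)/3 = (y : ℕ)/3 := by
      have := he3 ((y : ℕ)/3); simp only [hzdef]; omega
    by_cases hyz : y = z
    · rw [hyz]; exact hz
    · rcases hchain hy (hsub hz) hyz with h | h
      · rcases h with h | h
        · exact absurd h hyz
        · omega
      · rcases h with h | h
        · exact absurd h.symm hyz
        · omega

set_option synthInstance.maxHeartbeats 1000000 in
lemma chains_lower (d : ℕ) (hd : 9 ≤ d) :
    3^(d/3) * (if d % 3 = 2 then 2 else 1) ≤
      Nat.card {C : Set (Fin d) // IsMaxChain (rord d) C} := by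
  classical
  set q := d/3 with hq
  set j := (if d % 3 = 2 then 2 else 1 : ℕ) with hjdef
  have hj12 : (j = 1 ∧ d % 3 ≠ 2) ∨ (j = 2 ∧ d % 3 = 2) := by
    by_cases h : d % 3 = 2 <;> simp [hjdef, h]
  set E : ((Fin q → Fin 3) × Fin j) → ℕ → ℕ :=
    fun fc i => if h : i < q then (fc.1 ⟨i, h⟩ : ℕ) else (fc.2 : ℕ) with hE
  have hjpos : 0 < j := by omega
  have hE3 : ∀ fc i, E fc i < 3 := by
    intro fc i
    simp only [hE]
    split
    · exact (fc.1 _).isLt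
    · have := fc.2.isLt; omega
  have hEd : ∀ fc i, 3*i < d → 3*i + E fc i < d := by
    intro fc i h3i
    simp only [hE]
    split
    · rename_i h
      have := (fc.1 ⟨i, h⟩).isLt
      omega
    · rename_i h
      have hc := fc.2.isLt
      omega
  have hinj : Function.Injective (fun fc : (Fin q → Fin 3) × Fin j =>
      (⟨Cset d (E fc), Cset_maxchain d (E fc) (hE3 fc) (hEd fc)⟩ :
        {C : Set (Fin d) // IsMaxChain (rord d) C})) := by
    intro fc fc' h
    have hsets : Cset d (E fc) = Cset d (E fc') := congrArg Subtype.val h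
    have hblock : ∀ i, 3*i < d → E fc i = E fc' i := by
      intro i hi
      have hx := Cset_block_mem d (E fc) (hE3 fc) (hEd fc) i hi
      rw [hsets] at hx
      simp only [Cset, Set.mem_setOf_eq] at hx
      have h3 : (3*i + E fc i)/3 = i := by have := hE3 fc i; omega
      rw [h3] at hx
      omega
    have hf : fc.1 = fc'.1 := by
      funext i
      have hi3 : 3 * (i : ℕ) < d := by have := i.isLt; omega
      have := hblock i hi3
      simp only [hE, i.isLt, dif_pos, Fin.eta] at this
      exact Fin.ext this
    have hc : fc.2 = fc'.2 := by
      by_cases h3q : 3*q < d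
      · have := hblock q h3q
        simp only [hE, lt_irrefl, dif_neg (lt_irrefl q).elim] at this
        · exact Fin.ext (by simpa using this)
      · have hj1 : j = 1 := by omega
        have c1 := fc.2.isLt
        have c2 := fc'.2.isLt
        exact Fin.ext (by omega)
    exact Prod.ext hf hc
  haveI : Nonempty (Fin j) := ⟨⟨0, hjpos⟩⟩
  haveI : Finite {C : Set (Fin d) // IsMaxChain (rord d) C} := Subtype.finite
  have hle := Nat.card_le_card_of_injective _ hinj
  have hdom : Nat.card ((Fin q → Fin 3) × Fin j) = 3^q * j := by
    simp [Nat.card_prod, Nat.card_fun, Nat.card_eq_fintype_card]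
  rw [hdom] at hle
  exact hle


lemma half_mul (n : ℕ) : ((n+1)/2) * (n - (n+1)/2) ≤ n^2/4 := by
  obtain ⟨m, rfl | rfl⟩ := Nat.even_or_odd' n
  · have h1 : (2*m+1)/2 = m := by omega
    have h2 : 2*m - m = m := by omega
    have h3 : (2*m)^2 = m*m*4 := by ring
    rw [h1, h2, h3, Nat.mul_div_cancel _ (by norm_num)]
  · have h1 : (2*m+1+1)/2 = m+1 := by omega
    have h2 : 2*m+1 - (m+1) = m := by omega
    have h3 : (2*m+1)^2 = ((m+1)*m)*4 + 1 := by ring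
    rw [h1, h2, h3]
    set t := (m+1)*m with ht
    omega

lemma W0 : ∀ k, 3 ≤ k → (3*k)^2 < 4 * 3^k := by
  intro k hk
  induction k, hk using Nat.le_induction with
  | base => norm_num
  | succ k hk ih =>
    have h27 : 27 ≤ 3^k := by
      calc (27:ℕ) = 3^3 := by norm_num
      _ ≤ 3^k := Nat.pow_le_pow_right (by norm_num) hk
    have hp : (3:ℕ)^(k+1) = 3^k * 3 := pow_succ 3 k
    rw [hp]
    nlinarith [ih, hk, h27]

lemma W1' : ∀ m, 2 ≤ m → (3*m+4)^2 < 16 * 3^m := by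
  intro m hm
  induction m, hm using Nat.le_induction with
  | base => norm_num
  | succ m hm ih =>
    have h9 : 9 ≤ 3^m := by
      calc (9:ℕ) = 3^2 := by norm_num
      _ ≤ 3^m := Nat.pow_le_pow_right (by norm_num) hm
    have hp : (3:ℕ)^(m+1) = 3^m * 3 := pow_succ 3 m
    rw [hp]
    nlinarith [ih, hm, h9]

lemma W2 : ∀ k, 3 ≤ k → (3*k+2)^2 < 8 * 3^k := by
  intro k hk
  induction k, hk using Nat.le_induction with
  | base => norm_num
  | succ k hk ih =>
    have h27 : 27 ≤ 3^k := by
      calc (27:ℕ) = 3^3 := by norm_num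
      _ ≤ 3^k := Nat.pow_le_pow_right (by norm_num) hk
    have hp : (3:ℕ)^(k+1) = 3^k * 3 := pow_succ 3 k
    rw [hp]
    nlinarith [ih, hk, h27]

lemma W3a : ∀ k, 3 ≤ k → (3*k+2)^2 < 4*(3*k + 3^k) := by
  intro k hk
  induction k, hk using Nat.le_induction with
  | base => norm_num
  | succ k hk ih =>
    have h27 : 27 ≤ 3^k := by
      calc (27:ℕ) = 3^3 := by norm_num
      _ ≤ 3^k := Nat.pow_le_pow_right (by norm_num) hk
    have hp : (3:ℕ)^(k+1) = 3^k * 3 := pow_succ 3 k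
    rw [hp]
    nlinarith [ih, hk, h27]

lemma W3b : ∀ k, 3 ≤ k → (3*k+3)^2 < 4*(3*k+1 + 3^k) := by
  intro k hk
  induction k, hk using Nat.le_induction with
  | base => norm_num
  | succ k hk ih =>
    have h27 : 27 ≤ 3^k := by
      calc (27:ℕ) = 3^3 := by norm_num
      _ ≤ 3^k := Nat.pow_le_pow_right (by norm_num) hk
    have hp : (3:ℕ)^(k+1) = 3^k * 3 := pow_succ 3 k
    rw [hp]
    nlinarith [ih, hk, h27]

lemma W3c : ∀ k, 3 ≤ k → (3*k+4)^2 < 4*(3*k+2 + 2*3^k) := by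
  intro k hk
  induction k, hk using Nat.le_induction with
  | base => norm_num
  | succ k hk ih =>
    have h27 : 27 ≤ 3^k := by
      calc (27:ℕ) = 3^3 := by norm_num
      _ ≤ 3^k := Nat.pow_le_pow_right (by norm_num) hk
    have hp : (3:ℕ)^(k+1) = 3^k * 3 := pow_succ 3 k
    rw [hp]
    nlinarith [ih, hk, h27]

lemma W3 (d : ℕ) (hd : 9 ≤ d) :
    (d+2)^2 < 4*(d + 3^(d/3) * (if d % 3 = 2 then 2 else 1)) := by
  have hm : d % 3 = 0 ∨ d % 3 = 1 ∨ d % 3 = 2 := by omega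
  rcases hm with h | h | h
  · obtain ⟨kk, rfl⟩ : ∃ kk, d = 3*kk := ⟨d/3, by omega⟩
    have e : 3*kk/3 = kk := by omega
    rw [h, e]
    simpa using W3a kk (by omega)
  · obtain ⟨kk, rfl⟩ : ∃ kk, d = 3*kk+1 := ⟨d/3, by omega⟩
    have e : (3*kk+1)/3 = kk := by omega
    rw [h, e]
    simpa using W3b kk (by omega)
  · obtain ⟨kk, rfl⟩ : ∃ kk, d = 3*kk+2 := ⟨d/3, by omega⟩
    have e : (3*kk+2)/3 = kk := by omega
    rw [h, e]
    simpa [mul_comm] using W3c kk (by omega)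

/-- for `d ≥ 9` the maximal facet number of order polytopes,
`⌊(d+1)/2⌋·(d − ⌊(d+1)/2⌋) + d`, is strictly less than `M(d) + d`; consequently some
poset on `[d]` has a chain polytope with more facets (`d` plus the number of maximal
chains) than the number of facets (`m⋆ + m⋆ + |E|`) of any order polytope on `[d]`. -/

theorem stmt_9 (d k : ℕ) (hd : 9 ≤ d) :
    ((d = 3 * k → ((d + 1) / 2) * (d - (d + 1) / 2) + d < 3 ^ k + d) ∧
     (d = 3 * k + 1 → ((d + 1) / 2) * (d - (d + 1) / 2) + d < 4 * 3 ^ (k - 1) + d) ∧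
     (d = 3 * k + 2 → ((d + 1) / 2) * (d - (d + 1) / 2) + d < 2 * 3 ^ k + d)) ∧
    (∃ r : Fin d → Fin d → Prop, IsPartialOrder (Fin d) r ∧
      ∀ r' : Fin d → Fin d → Prop, IsPartialOrder (Fin d) r' →
        Nat.card {a : Fin d // ∀ b, r' b a → b = a} +
          Nat.card {a : Fin d // ∀ b, r' a b → b = a} +
          Nat.card {p : Fin d × Fin d // covRel r' p.1 p.2} <
        d + Nat.card {C : Set (Fin d) // IsMaxChain r C}) := by
  constructor
  · refine ⟨fun h0 => ?_, fun h1 => ?_, fun h2 => ?_⟩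
    · have hk : 3 ≤ k := by omega
      have hw := W0 k hk
      have hh := half_mul d
      have h4 : d^2/4 < 3^k := by
        rw [Nat.div_lt_iff_lt_mul (by norm_num : (0:ℕ) < 4)]
        calc d^2 = (3*k)^2 := by rw [h0]
          _ < 4 * 3^k := hw
          _ = 3^k * 4 := by ring
      omega
    · have hk : 3 ≤ k := by omega
      have hw := W1' (k-1) (by omega)
      have hh := half_mul d
      have h4 : d^2/4 < 4 * 3^(k-1) := by
        rw [Nat.div_lt_iff_lt_mul (by norm_num : (0:ℕ) < 4)]
        calc d^2 = (3*(k-1)+4)^2 := by rw [h1]; congr 1; omega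
          _ < 16 * 3^(k-1) := hw
          _ = 4 * 3^(k-1) * 4 := by ring
      omega
    · have hk : 3 ≤ k := by omega
      have hw := W2 k hk
      have hh := half_mul d
      have h4 : d^2/4 < 2 * 3^k := by
        rw [Nat.div_lt_iff_lt_mul (by norm_num : (0:ℕ) < 4)]
        calc d^2 = (3*k+2)^2 := by rw [h2]
          _ < 8 * 3^k := hw
          _ = 2 * 3^k * 4 := by ring
      omega
  · refine ⟨rord d, rord_po d, fun r' hpo' => ?_⟩
    have hb := facet_bound d r' hpo'
    have hc := chains_lower d hd
    have hw := W3 d hd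
    set N := 3^(d/3) * (if d % 3 = 2 then 2 else 1) with hN
    set x := (d+2)^2 with hx
    omega
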